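/- Let H be a Hilbert space and let U, V, P be bounded operators on H with P an orthogonal projection, U and V contractions, and U∘V = P. Then V∘P is a partial isometry with (V∘P)*∘(V∘P) = P. -/
import Mathlib


open ContinuousLinearMap
local notation "⟪" x ", " y "⟫" => @inner ℂ _ _ x y

/-- If `P` is an orthogonal projection, `U, V` are contractions with `U ∘ V = P`,
then `V ∘ P` is a partial isometry with `(V∘P)* ∘ (V∘P) = P`. -/
theorem contraction_comp_projection_partial_isometry
    {H : Type*} [NormedAddCommGroup H] [InnerProductSpace ℂ H] [CompleteSpace H]
    (U V P : H →L[ℂ] H)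
    (hP1 : P ∘L P = P) (hP2 : ContinuousLinearMap.adjoint P = P)
    (hU : ‖U‖ ≤ 1) (hV : ‖V‖ ≤ 1)
    (hUV : U ∘L V = P) :
    (V ∘L P) ∘L ContinuousLinearMap.adjoint (V ∘L P) ∘L (V ∘L P) = V ∘L P ∧
      ContinuousLinearMap.adjoint (V ∘L P) ∘L (V ∘L P) = P := by
  have hnorm : ∀ x : H, ‖V (P x)‖ = ‖P x‖ := by
    intro x
    have h1 : ‖V (P x)‖ ≤ ‖P x‖ := by
      calc ‖V (P x)‖ ≤ ‖V‖ * ‖P x‖ := V.le_opNorm _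
        _ ≤ 1 * ‖P x‖ := by gcongr
        _ = ‖P x‖ := one_mul _
    have h2 : ‖P x‖ ≤ ‖V (P x)‖ := by
      have : P x = U (V (P x)) := by
        have := congrArg (fun T => T (P x)) hUV
        simp only [comp_apply] at this
        rw [this]
        have := congrArg (fun T => T x) hP1
        simpa using this.symm
      calc ‖P x‖ = ‖U (V (P x))‖ := by rw [← this]
        _ ≤ ‖U‖ * ‖V (P x)‖ := U.le_opNorm _
        _ ≤ 1 * ‖V (P x)‖ := by gcongr
        _ = ‖V (P x)‖ := one_mul _
    linarith
  have key : ContinuousLinearMap.adjoint (V ∘L P) ∘L (V ∘L P) = P := by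
    have hz : ∀ x : H, ⟪((ContinuousLinearMap.adjoint (V ∘L P) ∘L (V ∘L P)) - P) x, x⟫ = 0 := by
      intro x
      have e1 : ⟪(ContinuousLinearMap.adjoint (V ∘L P) ∘L (V ∘L P)) x, x⟫
          = ⟪(V ∘L P) x, (V ∘L P) x⟫ := by
        rw [comp_apply, ContinuousLinearMap.adjoint_inner_left]
      have e2 : ⟪P x, x⟫ = ⟪P x, P x⟫ := by
        conv_lhs => rw [show P x = P (P x) from by
          have := congrArg (fun T => T x) hP1; simpa using this.symm]
        rw [← ContinuousLinearMap.adjoint_inner_left, hP2]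
      rw [ContinuousLinearMap.sub_apply, inner_sub_left, e1, e2,
        inner_self_eq_norm_sq_to_K, inner_self_eq_norm_sq_to_K]
      simp [comp_apply, hnorm x]
    have := (inner_map_self_eq_zero
      (((ContinuousLinearMap.adjoint (V ∘L P) ∘L (V ∘L P)) - P) : H →ₗ[ℂ] H)).mp (by
        intro x; exact hz x)
    have : (ContinuousLinearMap.adjoint (V ∘L P) ∘L (V ∘L P)) - P = 0 := by
      ext x
      have := congrArg (fun T => T x) this
      simpa using this
    exact sub_eq_zero.mp this
  refine ⟨?_, key⟩
  rw [key]
  ext x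
  simp only [comp_apply]
  congr 1
  have := congrArg (fun T => T x) hP1
  simpa using this
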